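/- Let n ≥ 1, let s_1, …, s_{n+1} ∈ ℝ, let ω̃_1, …, ω̃_{n+1} ≥ 0 with Σ_{i=1}^{n+1} ω̃_i = 1, and let α ∈ (0,1). Fix k ∈ {1,…,n} and suppose ω̃_{n+1} ≥ ω̃_k and s_{n+1} ≥ s_k. Let φ = (s_1, …, s_{n+1}) and let φ^k = (s_1, …, s_{k−1}, s_{n+1}, s_{k+1}, …, s_n, s_k) be the vector with entries k and n+1 swapped. Then for every t ∈ ℝ, the weighted empirical CDF of φ^k dominates that of φ, i.e. Σ_{i : φ^k_i ≤ t} ω̃_i ≥ Σ_{i : φ_i ≤ t} ω̃_i, and consequently the weighted (1−α)-quantiles satisfy Q_{1−α}(Σ_i ω̃_i δ_{φ_i}) ≥ Q_{1−α}(Σ_i ω̃_i δ_{φ^k_i}). (This is the swap-monotonicity claim, Eq. 17–21, in the appendix proof of Lemma 3.4: assigning the larger weight to the larger score can only increase the weighted quantile, and the difference of the weighted sums equals (ω̃_{n+1} − ω̃_k)(s_{n+1} − s_k) ≥ 0.) -/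
import Mathlib


open Finset

/-- **Swap monotonicity of the weighted quantile** (Eq. 17–21 in the proof of Lemma 3.4).
If the weight of coordinate `n+1` dominates that of coordinate `k` and the score
`s (n+1)` dominates `s k`, then swapping the two coordinates pointwise increases the
weighted empirical CDF, and consequently the weighted `(1−α)`-quantile of the swapped
vector `φᵏ` is at most that of the original vector `φ`. -/
theorem weighted_quantile_swap_mono
    (n : ℕ) (hn : 1 ≤ n) (s : Fin (n + 1) → ℝ) (wt : Fin (n + 1) → ℝ)
    (hwt : ∀ i, 0 ≤ wt i) (hsum : ∑ i, wt i = 1)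
    (α : ℝ) (hα : α ∈ Set.Ioo (0 : ℝ) 1)
    (k : Fin n)
    (hwk : wt (Fin.castSucc k) ≤ wt (Fin.last n))
    (hsk : s (Fin.castSucc k) ≤ s (Fin.last n)) :
    (∀ t : ℝ,
        ∑ i ∈ univ.filter (fun i => s i ≤ t), wt i
          ≤ ∑ i ∈ univ.filter
              (fun i => s (Equiv.swap (Fin.castSucc k) (Fin.last n) i) ≤ t), wt i) ∧
      sInf {t : ℝ | 1 - α ≤ ∑ i ∈ univ.filter
            (fun i => s (Equiv.swap (Fin.castSucc k) (Fin.last n) i) ≤ t), wt i}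
        ≤ sInf {t : ℝ | 1 - α ≤ ∑ i ∈ univ.filter (fun i => s i ≤ t), wt i} := by
  set K := Fin.castSucc k with hKdef
  set L := Fin.last n with hLdef
  set e := Equiv.swap K L with hedef
  have hKL : K ≠ L := Fin.ne_of_lt (Fin.castSucc_lt_last k)
  have key : ∀ t : ℝ,
      ∑ i ∈ univ.filter (fun i => s i ≤ t), wt i
        ≤ ∑ i ∈ univ.filter (fun i => s (e i) ≤ t), wt i := by
    intro t
    have h1 : ∑ i ∈ univ.filter (fun i => s (e i) ≤ t), wt i
        = ∑ i, if s i ≤ t then wt (e i) else 0 := by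
      rw [Finset.sum_filter]
      refine Fintype.sum_equiv e _ _ (fun i => ?_)
      simp [hedef, Equiv.swap_apply_self]
    have h2 : ∑ i ∈ univ.filter (fun i => s i ≤ t), wt i
        = ∑ i, if s i ≤ t then wt i else 0 := by
      rw [Finset.sum_filter]
    rw [h1, h2, ← sub_nonneg, ← Finset.sum_sub_distrib]
    have hsupp : ∑ i : Fin (n+1),
        ((if s i ≤ t then wt (e i) else 0) - (if s i ≤ t then wt i else 0))
        = ∑ i ∈ ({K, L} : Finset (Fin (n+1))),
        ((if s i ≤ t then wt (e i) else 0) - (if s i ≤ t then wt i else 0)) := by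
      symm
      refine Finset.sum_subset (Finset.subset_univ _) (fun x _ hx => ?_)
      simp only [Finset.mem_insert, Finset.mem_singleton, not_or] at hx
      rw [hedef, Equiv.swap_apply_of_ne_of_ne hx.1 hx.2]
      ring
    rw [hsupp, Finset.sum_pair hKL]
    have heK : e K = L := Equiv.swap_apply_left K L
    have heL : e L = K := Equiv.swap_apply_right K L
    rw [heK, heL]
    by_cases hLt : s L ≤ t
    · have hKt : s K ≤ t := le_trans hsk hLt
      simp [hKt, hLt]
    · by_cases hKt : s K ≤ t
      · simp only [hKt, hLt, if_true, if_false]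
        linarith
      · simp [hKt, hLt]
  refine ⟨key, ?_⟩
  set A := {t : ℝ | 1 - α ≤ ∑ i ∈ univ.filter (fun i => s (e i) ≤ t), wt i} with hA
  set B := {t : ℝ | 1 - α ≤ ∑ i ∈ univ.filter (fun i => s i ≤ t), wt i} with hB
  have hBA : B ⊆ A := fun t ht => le_trans ht (key t)
  have hne : (Finset.univ : Finset (Fin (n+1))).Nonempty := Finset.univ_nonempty
  have hBne : B.Nonempty := by
    refine ⟨Finset.univ.sup' hne s, ?_⟩
    have hfil : (univ.filter (fun i => s i ≤ Finset.univ.sup' hne s)) = univ := by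
      refine Finset.filter_true_of_mem (fun i _ => ?_)
      exact Finset.le_sup' s (Finset.mem_univ i)
    simp only [hB, Set.mem_setOf_eq, hfil, hsum]
    linarith [hα.1]
  have hAbdd : BddBelow A := by
    refine ⟨Finset.univ.inf' hne s, fun t ht => ?_⟩
    have hpos : (0:ℝ) < 1 - α := by linarith [hα.2]
    have hsum' : (0:ℝ) < ∑ i ∈ univ.filter (fun i => s (e i) ≤ t), wt i :=
      lt_of_lt_of_le hpos ht
    have hfilne : (univ.filter (fun i => s (e i) ≤ t)).Nonempty := by
      by_contra h
      rw [Finset.not_nonempty_iff_eq_empty] at h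
      rw [h, Finset.sum_empty] at hsum'
      exact lt_irrefl 0 hsum'
    obtain ⟨i, hi⟩ := hfilne
    rw [Finset.mem_filter] at hi
    calc Finset.univ.inf' hne s ≤ s (e i) := Finset.inf'_le s (Finset.mem_univ _)
      _ ≤ t := hi.2
  exact csInf_le_csInf hAbdd hBne hBA
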